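/- Let n ≥ 1, let π ∈ S_n(132, 1̲2̲3̲) and let d be the Motzkin path Γ(π). Then coinv(π) equals the area between d and the x-axis, and des(π) equals the number of tunnels of d minus one. -/

import Mathlib

open scoped Classical

noncomputable section

/-- Steps of a Motzkin path: up, down, horizontal. -/
inductive Step : Type
  | U : Step
  | D : Step
  | H : Step
  deriving DecidableEq

/-- Steps of a bicolored Motzkin path: up, down, horizontal of color `c₁`,
horizontal of color `c₂`. -/
inductive CStep : Type
  | U : CStep
  | D : CStep
  | H : CStep
  | Ht : CStep
  deriving DecidableEq

/-- A word over `{U,D,H}` is a Motzkin word if the numbers of `U`'s and `D`'s agree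
and every prefix has at least as many `U`'s as `D`'s. -/
def IsMotzkin (w : List Step) : Prop :=
  w.count Step.U = w.count Step.D ∧
  ∀ k, (w.take k).count Step.D ≤ (w.take k).count Step.U

/-- The `y`-coordinate of the lattice point reached after the first `i` steps. -/
def levelAt (w : List Step) (i : ℕ) : ℕ :=
  (w.take i).count Step.U - (w.take i).count Step.D

/-- The height of the `i`-th step (0-indexed): the `y`-coordinate of its ending
point for a down step, of its starting point otherwise. -/
def heightAt (w : List Step) (i : ℕ) : ℕ :=
  if w.getD i Step.H = Step.D then levelAt w (i + 1) else levelAt w i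

/-- Twice the area between the path and the `x`-axis (trapezoid rule). -/
def twoArea (w : List Step) : ℕ :=
  ∑ i ∈ Finset.range w.length, (levelAt w i + levelAt w (i + 1))

/-- The number of occurrences of `p` as a factor (subword of consecutive letters) of `w`. -/
def occFactor (p w : List Step) : ℕ :=
  ((Finset.range w.length).filter fun i => p <+: w.drop i).card

/-- The `y`-coordinate reached after `i` steps, bicolored version. -/
def cLevelAt (w : List CStep) (i : ℕ) : ℕ :=
  (w.take i).count CStep.U - (w.take i).count CStep.D

/-- The height of the `i`-th step, bicolored version. -/
def cHeightAt (w : List CStep) (i : ℕ) : ℕ :=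
  if w.getD i CStep.H = CStep.D then cLevelAt w (i + 1) else cLevelAt w i

/-- A bicolored Motzkin word: a Motzkin word whose horizontal steps have two possible
colors (`H` and `Ht`), horizontal steps at height `0` not being allowed to have the
second color. -/
def IsBicoloredMotzkin (w : List CStep) : Prop :=
  w.count CStep.U = w.count CStep.D ∧
  (∀ k, (w.take k).count CStep.D ≤ (w.take k).count CStep.U) ∧
  (∀ i < w.length, w.getD i CStep.H = CStep.Ht → cHeightAt w i ≠ 0)

/-- A histoire de Laguerre of length `n`: a bicolored Motzkin path of length `n`
together with a sequence `l` of nonnegative integers such that `l i ≤ h i` for each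
step, the inequality being strict for the horizontal steps of the second color
(the "suitable constraints" of De Medicis and Viennot). -/
def IsLaguerre (n : ℕ) (dl : List CStep × List ℕ) : Prop :=
  dl.1.length = n ∧ dl.2.length = n ∧ IsBicoloredMotzkin dl.1 ∧
  ∀ i < n, dl.2.getD i 0 ≤ cHeightAt dl.1 i ∧
    (dl.1.getD i CStep.H = CStep.Ht → dl.2.getD i 0 < cHeightAt dl.1 i)

/-- A labelled Motzkin path of length `n`: a Motzkin path whose down steps carry a
label not exceeding their height, all other steps carrying the label `0` (unlabelled). -/
def IsLabelledMotzkin (n : ℕ) (dl : List Step × List ℕ) : Prop :=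
  dl.1.length = n ∧ dl.2.length = n ∧ IsMotzkin dl.1 ∧
  ∀ i < n, (dl.1.getD i Step.H = Step.D → dl.2.getD i 0 ≤ heightAt dl.1 i) ∧
    (dl.1.getD i Step.H ≠ Step.D → dl.2.getD i 0 = 0)

/-- The embedding of plain Motzkin steps into bicolored steps. -/
def Step.toC : Step → CStep
  | Step.U => CStep.U
  | Step.D => CStep.D
  | Step.H => CStep.H

/-- The value (as a natural number, 0-indexed) of the permutation `π` at the
(0-indexed) position `i`; junk value `0` out of range. -/
def pv {n : ℕ} (π : Equiv.Perm (Fin n)) (i : ℕ) : ℕ :=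
  if h : i < n then (π ⟨i, h⟩ : Fin n).val else 0

/-- Position `p` starts an ascending run of `π` (in one-line notation):
either `p = 0` or there is a descent just before `p`. -/
def RunStartAt {n : ℕ} (π : Equiv.Perm (Fin n)) (p : Fin n) : Prop :=
  ∀ q : Fin n, (q : ℕ) + 1 = (p : ℕ) → π p < π q

/-- Position `p` ends an ascending run of `π`. -/
def RunEndAt {n : ℕ} (π : Equiv.Perm (Fin n)) (p : Fin n) : Prop :=
  ∀ q : Fin n, (p : ℕ) + 1 = (q : ℕ) → π q < π p

/-- The step of the bicolored Motzkin path `Γ(π)` associated with the value `v`: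
`U` if `v` is a head, `D` if it is a tail, `H` if it is a head-tail, `Ht` if it
is a boarder. -/
def gammaStep {n : ℕ} (π : Equiv.Perm (Fin n)) (v : Fin n) : CStep :=
  if RunStartAt π (π.symm v) then
    if RunEndAt π (π.symm v) then CStep.H else CStep.U
  else
    if RunEndAt π (π.symm v) then CStep.D else CStep.Ht

/-- The label of `Γ(π)` at the value `v`: the number of ascending runs of `π`
(determined by the position `pq.1` of their first element and the position `pq.2`
of their last element) whose first value is `< v`, whose last value is `> v`, and
whose last element precedes `v` in `π`. -/
def gammaLabel {n : ℕ} (π : Equiv.Perm (Fin n)) (v : Fin n) : ℕ :=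
  (Finset.univ.filter fun pq : Fin n × Fin n =>
    RunStartAt π pq.1 ∧ RunEndAt π pq.2 ∧ pq.1 ≤ pq.2 ∧
    (∀ r : Fin n, pq.1 ≤ r → r < pq.2 → ¬ RunEndAt π r) ∧
    π pq.1 < v ∧ v < π pq.2 ∧ pq.2 < π.symm v).card

/-- The map `Γ` from permutations to pairs (bicolored Motzkin path, label sequence). -/
def Gamma {n : ℕ} (π : Equiv.Perm (Fin n)) : List CStep × List ℕ :=
  (List.ofFn fun v => gammaStep π v, List.ofFn fun v => gammaLabel π v)

/-- The (uncolored) Motzkin path `Γ(π)` for permutations with no boarders: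
`U` for heads, `D` for tails, `H` for head-tails. -/
def gammaPath {n : ℕ} (π : Equiv.Perm (Fin n)) : List Step :=
  List.ofFn fun v : Fin n =>
    if RunStartAt π (π.symm v) then
      if RunEndAt π (π.symm v) then Step.H else Step.U
    else
      if RunEndAt π (π.symm v) then Step.D else Step.H

/-- `π` is an involution. -/
def IsInvolution {n : ℕ} (π : Equiv.Perm (Fin n)) : Prop :=
  ∀ x, π (π x) = x

/-- The Motzkin path `Ψ(π)` of an involution `π`: `H` at fixed points, `U` at the
smaller element of a 2-cycle, `D` at the larger element of a 2-cycle. -/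
def psiWord {n : ℕ} (π : Equiv.Perm (Fin n)) : List Step :=
  List.ofFn fun v : Fin n =>
    if π v = v then Step.H else if v < π v then Step.U else Step.D

/-- The label of `Ψ(π)` at `v`: if `v` is the larger element of a 2-cycle
`(π v, v)`, the number of 2-cycles `(x, π x)` with `π v < x < v < π x`; `0` otherwise. -/
def psiLabel {n : ℕ} (π : Equiv.Perm (Fin n)) (v : Fin n) : ℕ :=
  if π v < v then
    (Finset.univ.filter fun x : Fin n => π v < x ∧ x < v ∧ v < π x).card
  else 0

/-- The map `Ψ` from involutions to labelled Motzkin paths. -/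
def Psi {n : ℕ} (π : Equiv.Perm (Fin n)) : List Step × List ℕ :=
  (psiWord π, List.ofFn fun v => psiLabel π v)

/-- Number of inversions of `π`. -/
def invCount {n : ℕ} (π : Equiv.Perm (Fin n)) : ℕ :=
  (Finset.univ.filter fun p : Fin n × Fin n => p.1 < p.2 ∧ π p.2 < π p.1).card

/-- Number of coinversions of `π`. -/
def coinvCount {n : ℕ} (π : Equiv.Perm (Fin n)) : ℕ :=
  (Finset.univ.filter fun p : Fin n × Fin n => p.1 < p.2 ∧ π p.1 < π p.2).card

/-- Number of descents of `π`. -/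
def desCount {n : ℕ} (π : Equiv.Perm (Fin n)) : ℕ :=
  ((Finset.range (n - 1)).filter fun i => pv π (i + 1) < pv π i).card

/-- Number of ascents of `π`. -/
def ascCount {n : ℕ} (π : Equiv.Perm (Fin n)) : ℕ :=
  ((Finset.range (n - 1)).filter fun i => pv π i < pv π (i + 1)).card

/-- Number of fixed points of `π`. -/
def fixCount {n : ℕ} (π : Equiv.Perm (Fin n)) : ℕ :=
  (Finset.univ.filter fun i : Fin n => π i = i).card

/-- Number of occurrences of the consecutive pattern 123 in `π`. -/
def occC123 {n : ℕ} (π : Equiv.Perm (Fin n)) : ℕ :=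
  ((Finset.range (n - 2)).filter fun i =>
    pv π i < pv π (i + 1) ∧ pv π (i + 1) < pv π (i + 2)).card

/-- Number of occurrences of the consecutive pattern 132 in `π`. -/
def occC132 {n : ℕ} (π : Equiv.Perm (Fin n)) : ℕ :=
  ((Finset.range (n - 2)).filter fun i =>
    pv π i < pv π (i + 2) ∧ pv π (i + 2) < pv π (i + 1)).card

/-- Number of occurrences of the consecutive pattern 213 in `π`. -/
def occC213 {n : ℕ} (π : Equiv.Perm (Fin n)) : ℕ :=
  ((Finset.range (n - 2)).filter fun i =>
    pv π (i + 1) < pv π i ∧ pv π i < pv π (i + 2)).card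

/-- Number of occurrences of the consecutive pattern 231 in `π`. -/
def occC231 {n : ℕ} (π : Equiv.Perm (Fin n)) : ℕ :=
  ((Finset.range (n - 2)).filter fun i =>
    pv π (i + 2) < pv π i ∧ pv π i < pv π (i + 1)).card

/-- Number of occurrences of the consecutive pattern 312 in `π`. -/
def occC312 {n : ℕ} (π : Equiv.Perm (Fin n)) : ℕ :=
  ((Finset.range (n - 2)).filter fun i =>
    pv π (i + 1) < pv π (i + 2) ∧ pv π (i + 2) < pv π i).card

/-- Number of occurrences of the consecutive pattern 321 in `π`. -/
def occC321 {n : ℕ} (π : Equiv.Perm (Fin n)) : ℕ :=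
  ((Finset.range (n - 2)).filter fun i =>
    pv π (i + 2) < pv π (i + 1) ∧ pv π (i + 1) < pv π i).card

/-- `π` contains the classical pattern 132. -/
def Contains132 {n : ℕ} (π : Equiv.Perm (Fin n)) : Prop :=
  ∃ i j k : Fin n, i < j ∧ j < k ∧ π i < π k ∧ π k < π j

/-- `π` contains the consecutive pattern 123. -/
def ContainsC123 {n : ℕ} (π : Equiv.Perm (Fin n)) : Prop :=
  ∃ i j k : Fin n, (i : ℕ) + 1 = (j : ℕ) ∧ (j : ℕ) + 1 = (k : ℕ) ∧ π i < π j ∧ π j < π k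

/-- `π` contains the classical pattern 3412. -/
def Contains3412 {n : ℕ} (π : Equiv.Perm (Fin n)) : Prop :=
  ∃ i₁ i₂ i₃ i₄ : Fin n, i₁ < i₂ ∧ i₂ < i₃ ∧ i₃ < i₄ ∧
    π i₃ < π i₄ ∧ π i₄ < π i₁ ∧ π i₁ < π i₂

/-- `π` contains the vincular pattern 1-2̲3̲. -/
def Contains1_23 {n : ℕ} (π : Equiv.Perm (Fin n)) : Prop :=
  ∃ i j k : Fin n, i < j ∧ (j : ℕ) + 1 = (k : ℕ) ∧ π i < π j ∧ π j < π k

/-- `π` contains the vincular pattern 1-3̲2̲. -/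
def Contains1_32 {n : ℕ} (π : Equiv.Perm (Fin n)) : Prop :=
  ∃ i j k : Fin n, i < j ∧ (j : ℕ) + 1 = (k : ℕ) ∧ π i < π k ∧ π k < π j

/-- `w` is the one-line notation of a permutation of `{0, …, n-1}`. -/
def IsPermWord (n : ℕ) (w : List ℕ) : Prop :=
  List.Perm w (List.range n)

/-- Position `p` starts an ascending run of the word `w`. -/
def wRunStart (w : List ℕ) (p : ℕ) : Prop :=
  p = 0 ∨ w.getD p 0 < w.getD (p - 1) 0

/-- Position `p` ends an ascending run of the word `w`. -/
def wRunEnd (w : List ℕ) (p : ℕ) : Prop :=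
  p + 1 = w.length ∨ w.getD (p + 1) 0 < w.getD p 0

/-- The step of `Γ(w)` associated with the value `v`. -/
def wGammaStep (w : List ℕ) (v : ℕ) : CStep :=
  if wRunStart w (w.idxOf v) then
    if wRunEnd w (w.idxOf v) then CStep.H else CStep.U
  else
    if wRunEnd w (w.idxOf v) then CStep.D else CStep.Ht

/-- The label of `Γ(w)` at the value `v`. -/
def wGammaLabel (w : List ℕ) (v : ℕ) : ℕ :=
  ((Finset.range w.length ×ˢ Finset.range w.length).filter fun pq =>
    wRunStart w pq.1 ∧ wRunEnd w pq.2 ∧ pq.1 ≤ pq.2 ∧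
    (∀ r, pq.1 ≤ r → r < pq.2 → ¬ wRunEnd w r) ∧
    w.getD pq.1 0 < v ∧ v < w.getD pq.2 0 ∧ pq.2 < w.idxOf v).card

/-- The map `Γ` on one-line words. -/
def wGamma (w : List ℕ) : List CStep × List ℕ :=
  ((List.range w.length).map (wGammaStep w), (List.range w.length).map (wGammaLabel w))

/-- The word `w` contains the vincular pattern 1-2̲3̲. -/
def wContains1_23 (w : List ℕ) : Prop :=
  ∃ i j, i < j ∧ j + 1 < w.length ∧
    w.getD i 0 < w.getD j 0 ∧ w.getD j 0 < w.getD (j + 1) 0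

/-- The word `w` contains the vincular pattern 1-3̲2̲. -/
def wContains1_32 (w : List ℕ) : Prop :=
  ∃ i j, i < j ∧ j + 1 < w.length ∧
    w.getD i 0 < w.getD (j + 1) 0 ∧ w.getD (j + 1) 0 < w.getD j 0

/-- The word `w` contains the classical pattern 132. -/
def wContains132 (w : List ℕ) : Prop :=
  ∃ i j k, i < j ∧ j < k ∧ k < w.length ∧
    w.getD i 0 < w.getD k 0 ∧ w.getD k 0 < w.getD j 0

/-- The word `w` contains the consecutive pattern 123. -/
def wContainsC123 (w : List ℕ) : Prop :=
  ∃ i, i + 2 < w.length ∧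
    w.getD i 0 < w.getD (i + 1) 0 ∧ w.getD (i + 1) 0 < w.getD (i + 2) 0

/-- The one-line word of the Foata image `F(π)` of an involution `π`: write `π` in
standard cycle notation (each cycle with its least element first, cycles in
decreasing order of their least elements) and erase the parentheses. -/
def foataWord {n : ℕ} (π : Equiv.Perm (Fin n)) : List ℕ :=
  (((List.range n).reverse).map fun m =>
    if pv π m = m then [m]
    else if m < pv π m then [m, pv π m]
    else ([] : List ℕ)).flatten

/-- The number of long tunnels of `d`: occurrences of factors `U α D` with `α` a
nonempty Motzkin word. -/
def longTunnelCount (d : List Step) : ℕ :=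
  ((Finset.range d.length ×ˢ Finset.range d.length).filter fun ij =>
    ij.1 + 1 < ij.2 ∧ d.getD ij.1 Step.H = Step.U ∧ d.getD ij.2 Step.H = Step.D ∧
    IsMotzkin ((d.drop (ij.1 + 1)).take (ij.2 - ij.1 - 1))).card

/-- The number of weak valleys of `d`: occurrences of the factors `HH, HU, DH, DU`. -/
def weakValleyCount (d : List Step) : ℕ :=
  occFactor [Step.H, Step.H] d + occFactor [Step.H, Step.U] d +
  occFactor [Step.D, Step.H] d + occFactor [Step.D, Step.U] d

end

section BarilAux

variable {n : ℕ} (π : Equiv.Perm (Fin n))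

private lemma pv_eq {p : ℕ} (h : p < n) : pv π p = ((π ⟨p, h⟩ : Fin n) : ℕ) := dif_pos h

private lemma pv_val (p : Fin n) : pv π (p : ℕ) = ((π p : Fin n) : ℕ) := by
  rw [pv, dif_pos p.isLt, Fin.eta]

private lemma count_ofFn' {m : ℕ} {α} [DecidableEq α] (f : Fin m → α) (a : α) :
    (List.ofFn f).count a = (Finset.univ.filter fun v => f v = a).card := by
  rw [Finset.card_filter]
  induction m with
  | zero => simp
  | succ m ih =>
      rw [List.ofFn_succ, List.count_cons, ih, Fin.sum_univ_succ]
      by_cases h : f 0 = a <;> simp [h, add_comm]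

private lemma count_take_ofFn' {m : ℕ} {α} [DecidableEq α] (f : Fin m → α) (a : α) (i : ℕ)
    (hi : i ≤ m) :
    ((List.ofFn f).take i).count a
      = (Finset.univ.filter fun v : Fin m => (v : ℕ) < i ∧ f v = a).card := by
  rw [← Fin.ofFn_take_eq_take_ofFn hi, count_ofFn']
  apply Finset.card_nbij (fun v => Fin.castLE hi v)
  · intro v hv
    simp only [Finset.coe_filter, Finset.mem_filter, Finset.mem_univ, true_and, Set.mem_setOf_eq] at hv ⊢
    exact ⟨v.isLt, hv⟩
  · intro x _ y _ hxy
    exact Fin.castLE_injective hi hxy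
  · intro v hv
    simp only [Finset.coe_filter, Set.mem_setOf_eq, Finset.mem_univ, true_and] at hv
    exact ⟨⟨v, hv.1⟩, by simp only [Finset.coe_filter, Set.mem_setOf_eq]; simpa [Fin.take] using hv.2, by simp [Fin.ext_iff]⟩

/-- The set of (0-indexed) ascent positions of `π`. -/
private def ascSet : Finset ℕ := (Finset.range (n - 1)).filter fun p => pv π p < pv π (p + 1)

private lemma mem_ascSet {p : ℕ} :
    p ∈ ascSet π ↔ p + 1 < n ∧ pv π p < pv π (p + 1) := by
  simp only [ascSet, Finset.mem_filter, Finset.mem_range]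
  constructor
  · rintro ⟨h1, h2⟩; exact ⟨by omega, h2⟩
  · rintro ⟨h1, h2⟩; exact ⟨by omega, h2⟩

/-- `π` avoids the vincular pattern 1-23. -/
private lemma no1_23 (h₁ : ¬ Contains132 π) (h₂ : ¬ ContainsC123 π) : ¬ Contains1_23 π := by
  rintro ⟨i, j, k, hij, hjk, hp1, hp2⟩
  suffices H : ∀ m (i j k : Fin n), (j : ℕ) - (i : ℕ) ≤ m → i < j → (j : ℕ) + 1 = (k : ℕ) →
      π i < π j → π j < π k → False from H _ i j k le_rfl hij hjk hp1 hp2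
  intro m
  induction m with
  | zero =>
      intro i j k hm hij _ _ _
      rw [Fin.lt_def] at hij; omega
  | succ m ih =>
      intro i j k hm hij hjk h1 h2
      rw [Fin.lt_def] at hij
      by_cases hc : (i : ℕ) + 1 = (j : ℕ)
      · exact h₂ ⟨i, j, k, hc, hjk, h1, h2⟩
      · have hi1 : (i : ℕ) + 1 < n := lt_trans (by omega) j.isLt
        set i' : Fin n := ⟨(i : ℕ) + 1, hi1⟩ with hi'
        have hii' : i < i' := by rw [Fin.lt_def]; simp [hi']
        have hi'j : i' < j := by rw [Fin.lt_def]; simp only [hi']; omega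
        rcases lt_or_gt_of_ne (show π i' ≠ π j from fun h => (ne_of_lt hi'j) (π.injective h)) with
          h | h
        · exact ih i' j k (by simp only [hi']; omega) hi'j hjk h h2
        · exact h₁ ⟨i, i', j, hii', hi'j, h1, h⟩

/-- The fiber of coinversions with second coordinate `j`. -/
private def cset (j : Fin n) : Finset (Fin n) :=
  Finset.univ.filter fun i => i < j ∧ π i < π j

private lemma coinv_eq_sum : coinvCount π = ∑ j : Fin n, (cset π j).card := by
  rw [coinvCount,
    Finset.card_eq_sum_card_fiberwise (f := Prod.snd) (t := Finset.univ)
      (fun _ _ => Finset.mem_univ _)]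
  refine Finset.sum_congr rfl fun j _ => ?_
  apply Finset.card_nbij Prod.fst
  · rintro ⟨a, b⟩ hab
    simp only [Finset.coe_filter, Finset.mem_filter, Finset.mem_univ, true_and, Set.mem_setOf_eq] at hab
    simp only [cset, Finset.coe_filter, Finset.mem_filter, Finset.mem_univ, true_and, Set.mem_setOf_eq]
    obtain ⟨⟨h1, h2⟩, h3⟩ := hab
    subst h3; exact ⟨h1, h2⟩
  · rintro ⟨a, b⟩ hab ⟨c, d⟩ hcd h
    simp only [Finset.coe_filter, Set.mem_setOf_eq, Finset.mem_univ, true_and] at hab hcd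
    simp only at h
    obtain ⟨-, h2⟩ := hab; obtain ⟨-, h4⟩ := hcd
    simp [Prod.ext_iff, h, h2, h4]
  · intro a ha
    simp only [Finset.coe_filter, Set.mem_setOf_eq, Finset.mem_univ, true_and, cset] at ha
    exact ⟨(a, j), by simpa using ⟨ha.1, ha.2⟩, rfl⟩

private lemma cset_eq_empty (h₁ : ¬ Contains132 π) {j : Fin n}
    (hj : RunStartAt π j) : cset π j = ∅ := by
  rw [Finset.eq_empty_iff_forall_notMem]
  intro i hi
  simp only [cset, Finset.mem_filter, Finset.mem_univ, true_and] at hi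
  obtain ⟨hij, hπ⟩ := hi
  rw [Fin.lt_def] at hij
  by_cases hc : (i : ℕ) + 1 = (j : ℕ)
  · exact absurd hπ (not_lt.2 (le_of_lt (hj i hc)))
  · have hj0 : (j : ℕ) - 1 < n := lt_trans (by omega) j.isLt
    set q : Fin n := ⟨(j : ℕ) - 1, hj0⟩ with hq
    have hq1 : (q : ℕ) + 1 = (j : ℕ) := by simp only [hq]; omega
    refine h₁ ⟨i, q, j, ?_, ?_, hπ, hj q hq1⟩
    · rw [Fin.lt_def]; simp only [hq]; omega
    · rw [Fin.lt_def]; simp only [hq]; omega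

private lemma cset_card_asc (h₁ : ¬ Contains132 π) (h123 : ¬ Contains1_23 π)
    {j q : Fin n} (hq : (q : ℕ) + 1 = (j : ℕ)) (hasc : π q < π j) :
    (cset π j).card = (π j : ℕ) - (π q : ℕ) := by
  rw [show (π j : ℕ) - (π q : ℕ) = (Finset.Ico (π q : ℕ) (π j : ℕ)).card from
    (Nat.card_Ico _ _).symm]
  apply Finset.card_nbij (fun i => ((π i : Fin n) : ℕ))
  · intro i hi
    simp only [cset, Finset.coe_filter, Finset.mem_filter, Finset.mem_univ, true_and, Set.mem_setOf_eq] at hi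
    obtain ⟨hij, hπ⟩ := hi
    rw [Finset.coe_Ico, Set.mem_Ico]
    refine ⟨?_, hπ⟩
    by_contra hlt
    push_neg at hlt
    have hiq : i < q := by
      rw [Fin.lt_def] at hij ⊢
      have hne : i ≠ q := fun h => by subst h; exact absurd hlt (lt_irrefl _)
      rw [Fin.ne_iff_vne] at hne; omega
    exact h123 ⟨i, q, j, hiq, hq, hlt, hasc⟩
  · intro x _ y _ hxy
    exact π.injective (Fin.val_injective hxy)
  · intro c hc
    simp only [Finset.coe_Ico, Set.mem_Ico] at hc
    obtain ⟨hc1, hc2⟩ := hc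
    have hcn : c < n := lt_trans hc2 (π j).isLt
    set cf : Fin n := ⟨c, hcn⟩ with hcf
    set i : Fin n := π.symm cf with hi
    have hπi : π i = cf := π.apply_symm_apply cf
    have hπilt : π i < π j := by rw [Fin.lt_def, hπi]; exact hc2
    have hij : i < j := by
      have hne : i ≠ j := fun h => by rw [h] at hπilt; exact absurd hπilt (lt_irrefl _)
      rcases lt_or_gt_of_ne hne with h | h
      · exact h
      · exfalso
        rw [Fin.lt_def] at hπilt
        by_cases hca : c = (π q : ℕ)
        · have hcq : cf = π q := Fin.ext hca
          have hiq : i = q := by rw [hi, hcq, Equiv.symm_apply_apply]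
          have hjq : (j : ℕ) < (q : ℕ) := Fin.lt_def.mp (hiq ▸ h)
          omega
        · have hqc : π q < π i := by rw [Fin.lt_def, hπi]; simp only [hcf]; omega
          have hqj : q < j := by rw [Fin.lt_def]; omega
          exact h₁ ⟨q, j, i, hqj, h, hqc, by rw [Fin.lt_def]; exact hπilt⟩
    refine ⟨i, ?_, by show ((π i : Fin n) : ℕ) = c; rw [hπi]⟩
    simp only [cset, Finset.coe_filter, Set.mem_setOf_eq, Finset.mem_univ, true_and]
    exact ⟨hij, hπilt⟩

private lemma sum_cset (h₁ : ¬ Contains132 π) (h₂ : ¬ ContainsC123 π) :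
    ∑ j : Fin n, (cset π j).card = ∑ p ∈ ascSet π, (pv π (p + 1) - pv π p) := by
  rcases Nat.eq_zero_or_pos n with rfl | hn
  · simp [ascSet]
  have h123 := no1_23 π h₁ h₂
  set T : Finset (Fin n) := Finset.univ.filter fun j : Fin n =>
      0 < (j : ℕ) ∧ pv π ((j : ℕ) - 1) < pv π (j : ℕ) with hTdef
  have hT : ∀ j : Fin n, j ∈ Finset.univ → j ∉ T → (cset π j).card = 0 := by
    intro j _ hj
    simp only [hTdef, Finset.mem_filter, Finset.mem_univ, true_and, not_and, not_lt] at hj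
    rw [Finset.card_eq_zero]
    apply cset_eq_empty π h₁
    intro q hq1
    by_cases hj0 : 0 < (j : ℕ)
    · have hle := hj hj0
      have hqv : (q : ℕ) = (j : ℕ) - 1 := by omega
      have hv1 : pv π ((j : ℕ) - 1) = (π q : ℕ) := by rw [← hqv, pv_val]
      have hv2 : pv π (j : ℕ) = (π j : ℕ) := pv_val π j
      have hne : π j ≠ π q := fun h => by
        have h' := π.injective h
        rw [h'] at hq1; omega
      rw [Fin.ne_iff_vne] at hne
      rw [Fin.lt_def]; omega
    · omega
  rw [← Finset.sum_subset (Finset.subset_univ T) hT]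
  apply Finset.sum_nbij' (i := fun j : Fin n => (j : ℕ) - 1)
    (j := fun p : ℕ => if h : p + 1 < n then (⟨p + 1, h⟩ : Fin n) else ⟨0, hn⟩)
  · intro j hj
    simp only [hTdef, Finset.mem_filter, Finset.mem_univ, true_and] at hj
    obtain ⟨hj0, hdesc⟩ := hj
    rw [mem_ascSet]
    have he : (j : ℕ) - 1 + 1 = (j : ℕ) := by omega
    rw [he]
    exact ⟨j.isLt, hdesc⟩
  · intro p hp
    rw [mem_ascSet] at hp
    obtain ⟨hp1, hp2⟩ := hp
    simp only [hTdef, Finset.mem_filter, Finset.mem_univ, true_and, dif_pos hp1]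
    simpa using hp2
  · intro j hj
    simp only [hTdef, Finset.mem_filter, Finset.mem_univ, true_and] at hj
    have he : (j : ℕ) - 1 + 1 = (j : ℕ) := by omega
    simp only [he, dif_pos j.isLt]
  · intro p hp
    rw [mem_ascSet] at hp
    simp only [dif_pos hp.1]
    omega
  · intro j hj
    simp only [hTdef, Finset.mem_filter, Finset.mem_univ, true_and] at hj
    obtain ⟨hj0, hdesc⟩ := hj
    have hj1 : (j : ℕ) - 1 < n := lt_trans (by omega) j.isLt
    have hq : ((⟨(j : ℕ) - 1, hj1⟩ : Fin n) : ℕ) + 1 = (j : ℕ) := by simp only []; omega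
    have he : (j : ℕ) - 1 + 1 = (j : ℕ) := by omega
    have hv1 : pv π ((j : ℕ) - 1) = ((π ⟨(j : ℕ) - 1, hj1⟩ : Fin n) : ℕ) := pv_val π ⟨(j : ℕ) - 1, hj1⟩
    have hv2 : pv π ((j : ℕ) - 1 + 1) = (π j : ℕ) := by
      rw [he]; exact pv_val π j
    have hv2' : pv π (j : ℕ) = (π j : ℕ) := pv_val π j
    have hasc : π ⟨(j : ℕ) - 1, hj1⟩ < π j := by rw [Fin.lt_def]; omega
    rw [cset_card_asc π h₁ h123 hq hasc, hv1, hv2]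

/-- The step function underlying `gammaPath`. -/
private noncomputable def gfun : Fin n → Step := fun v =>
  if RunStartAt π (π.symm v) then
    if RunEndAt π (π.symm v) then Step.H else Step.U
  else
    if RunEndAt π (π.symm v) then Step.D else Step.H

private lemma gammaPath_eq : gammaPath π = List.ofFn (gfun π) := rfl

private lemma not_runEnd_iff (p : Fin n) :
    ¬ RunEndAt π p ↔ ((p : ℕ) + 1 < n ∧ pv π p < pv π ((p : ℕ) + 1)) := by
  constructor
  · intro h
    rw [RunEndAt] at h
    push_neg at h
    obtain ⟨q, hq, hq2⟩ := h
    have hlt : (p : ℕ) + 1 < n := by rw [hq]; exact q.isLt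
    refine ⟨hlt, ?_⟩
    have hne : π q ≠ π p := fun h => by
      have h' := π.injective h
      rw [h'] at hq; omega
    rw [Fin.ne_iff_vne] at hne
    have e1 : pv π ((p : ℕ) + 1) = ((π q : Fin n) : ℕ) := by rw [hq]; exact pv_val π q
    have e2 : pv π (p : ℕ) = ((π p : Fin n) : ℕ) := pv_val π p
    rw [Fin.le_def] at hq2
    omega
  · rintro ⟨hlt, hasc⟩ hend
    have hd := hend ⟨(p : ℕ) + 1, hlt⟩ rfl
    rw [Fin.lt_def] at hd
    have e1 : pv π ((p : ℕ) + 1) = ((π ⟨(p : ℕ) + 1, hlt⟩ : Fin n) : ℕ) := pv_val π ⟨(p : ℕ) + 1, hlt⟩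
    have e2 : pv π (p : ℕ) = ((π p : Fin n) : ℕ) := pv_val π p
    omega

private lemma not_runStart_iff (p : Fin n) :
    ¬ RunStartAt π p ↔ (0 < (p : ℕ) ∧ pv π ((p : ℕ) - 1) < pv π p) := by
  constructor
  · intro h
    rw [RunStartAt] at h
    push_neg at h
    obtain ⟨q, hq, hq2⟩ := h
    have hp0 : 0 < (p : ℕ) := by omega
    refine ⟨hp0, ?_⟩
    have hne : π p ≠ π q := fun h => by
      have h' := π.injective h
      rw [h'] at hq; omega
    rw [Fin.ne_iff_vne] at hne
    have e1 : pv π ((p : ℕ) - 1) = ((π q : Fin n) : ℕ) := by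
      rw [show (p : ℕ) - 1 = (q : ℕ) by omega]; exact pv_val π q
    have e2 : pv π (p : ℕ) = ((π p : Fin n) : ℕ) := pv_val π p
    rw [Fin.le_def] at hq2
    omega
  · rintro ⟨hp0, hdesc⟩ hstart
    have hqn : (p : ℕ) - 1 < n := lt_trans (by omega) p.isLt
    have hd := hstart ⟨(p : ℕ) - 1, hqn⟩ (by simp; omega)
    rw [Fin.lt_def] at hd
    have e1 : pv π ((p : ℕ) - 1) = ((π ⟨(p : ℕ) - 1, hqn⟩ : Fin n) : ℕ) := pv_val π ⟨(p : ℕ) - 1, hqn⟩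
    have e2 : pv π (p : ℕ) = ((π p : Fin n) : ℕ) := pv_val π p
    omega

private lemma not_middle (h₂ : ¬ ContainsC123 π) (p : Fin n) :
    RunStartAt π p ∨ RunEndAt π p := by
  by_contra h
  push_neg at h
  obtain ⟨hs, he⟩ := h
  rw [not_runStart_iff] at hs
  rw [not_runEnd_iff] at he
  obtain ⟨hp0, hdesc⟩ := hs
  obtain ⟨hlt, hasc⟩ := he
  have hqn : (p : ℕ) - 1 < n := lt_trans (by omega) p.isLt
  have e1 : pv π ((p : ℕ) - 1) = ((π ⟨(p : ℕ) - 1, hqn⟩ : Fin n) : ℕ) := pv_val π ⟨(p : ℕ) - 1, hqn⟩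
  have e2 : pv π (p : ℕ) = ((π p : Fin n) : ℕ) := pv_val π p
  have e3 : pv π ((p : ℕ) + 1) = ((π ⟨(p : ℕ) + 1, hlt⟩ : Fin n) : ℕ) := pv_val π ⟨(p : ℕ) + 1, hlt⟩
  refine h₂ ⟨⟨(p : ℕ) - 1, hqn⟩, p, ⟨(p : ℕ) + 1, hlt⟩, by simp; omega, by simp, ?_, ?_⟩
  · rw [Fin.lt_def]; omega
  · rw [Fin.lt_def]; omega

private lemma gfun_eq_U_iff (h₂ : ¬ ContainsC123 π) (v : Fin n) :
    gfun π v = Step.U ↔ ((π.symm v : Fin n) : ℕ) ∈ ascSet π := by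
  rw [mem_ascSet]
  have hiff := not_runEnd_iff π (π.symm v)
  rw [gfun]
  split_ifs with hs he he
  · simp only [reduceCtorEq, false_iff]
    intro hmem
    exact (hiff.2 hmem) he
  · simp only [true_iff]
    exact hiff.1 he
  · simp only [reduceCtorEq, false_iff]
    intro hmem
    exact (hiff.2 hmem) he
  · simp only [reduceCtorEq, false_iff]
    intro _
    exact (not_middle π h₂ (π.symm v)).elim hs he

private lemma gfun_eq_D_iff (h₂ : ¬ ContainsC123 π) (v : Fin n) :
    gfun π v = Step.D ↔
      (0 < ((π.symm v : Fin n) : ℕ) ∧ ((π.symm v : Fin n) : ℕ) - 1 ∈ ascSet π) := by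
  set p : Fin n := π.symm v with hp
  have hiff := not_runStart_iff π p
  have hmemiff : (0 < (p : ℕ) ∧ (p : ℕ) - 1 ∈ ascSet π) ↔ ¬ RunStartAt π p := by
    rw [hiff, mem_ascSet]
    constructor
    · rintro ⟨h0, _, h2⟩
      rw [Nat.sub_add_cancel h0] at h2
      exact ⟨h0, h2⟩
    · rintro ⟨h0, h2⟩
      refine ⟨h0, ?_, ?_⟩
      · omega
      · rw [Nat.sub_add_cancel h0]; exact h2
  rw [gfun]
  split_ifs with hs he he
  · simp only [reduceCtorEq, false_iff]
    intro hmem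
    exact (hmemiff.1 hmem) hs
  · simp only [reduceCtorEq, false_iff]
    intro hmem
    exact (hmemiff.1 hmem) hs
  · simp only [true_iff]
    exact hmemiff.2 hs
  · simp only [reduceCtorEq, false_iff]
    intro _
    exact (not_middle π h₂ p).elim hs he

private lemma countU_take (h₂ : ¬ ContainsC123 π) (i : ℕ) (hi : i ≤ n) :
    (((gammaPath π).take i).count Step.U)
      = ((ascSet π).filter fun p => pv π p < i).card := by
  rw [gammaPath_eq, count_take_ofFn' _ _ i hi]
  apply Finset.card_nbij (fun v : Fin n => ((π.symm v : Fin n) : ℕ))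
  · intro v hv
    simp only [Finset.coe_filter, Finset.mem_filter, Finset.mem_univ, true_and, Set.mem_setOf_eq] at hv
    obtain ⟨hvi, hU⟩ := hv
    rw [gfun_eq_U_iff π h₂] at hU
    rw [Finset.mem_coe, Finset.mem_filter]
    refine ⟨hU, ?_⟩
    rw [pv_eq π (π.symm v).isLt]
    simp only [Fin.eta, Equiv.apply_symm_apply]
    exact hvi
  · intro x _ y _ hxy
    exact π.symm.injective (Fin.val_injective hxy)
  · intro p hp
    simp only [Finset.coe_filter, Set.mem_setOf_eq] at hp
    obtain ⟨hpA, hpi⟩ := hp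
    have hpn : p < n := by
      rw [mem_ascSet] at hpA; omega
    refine ⟨π ⟨p, hpn⟩, ?_, by simp⟩
    simp only [Finset.coe_filter, Set.mem_setOf_eq, Finset.mem_univ, true_and]
    constructor
    · rw [pv_eq π hpn] at hpi; exact hpi
    · rw [gfun_eq_U_iff π h₂]
      simpa using hpA

private lemma countD_take (h₂ : ¬ ContainsC123 π) (i : ℕ) (hi : i ≤ n) :
    (((gammaPath π).take i).count Step.D)
      = ((ascSet π).filter fun p => pv π (p + 1) < i).card := by
  rw [gammaPath_eq, count_take_ofFn' _ _ i hi]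
  apply Finset.card_nbij (fun v : Fin n => ((π.symm v : Fin n) : ℕ) - 1)
  · intro v hv
    simp only [Finset.coe_filter, Finset.mem_filter, Finset.mem_univ, true_and, Set.mem_setOf_eq] at hv
    obtain ⟨hvi, hD⟩ := hv
    rw [gfun_eq_D_iff π h₂] at hD
    obtain ⟨h0, hmem⟩ := hD
    rw [Finset.mem_coe, Finset.mem_filter]
    refine ⟨hmem, ?_⟩
    have he : ((π.symm v : Fin n) : ℕ) - 1 + 1 = ((π.symm v : Fin n) : ℕ) := by omega
    rw [he, pv_eq π (π.symm v).isLt]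
    simp only [Fin.eta, Equiv.apply_symm_apply]
    exact hvi
  · intro x hx y hy hxy
    simp only [Finset.coe_filter, Set.mem_setOf_eq, Finset.mem_univ, true_and] at hx hy
    rw [gfun_eq_D_iff π h₂] at hx hy
    have hx0 := hx.2.1
    have hy0 := hy.2.1
    simp only at hxy
    have : ((π.symm x : Fin n) : ℕ) = ((π.symm y : Fin n) : ℕ) := by omega
    exact π.symm.injective (Fin.val_injective this)
  · intro p hp
    simp only [Finset.coe_filter, Set.mem_setOf_eq] at hp
    obtain ⟨hpA, hpi⟩ := hp
    have hpn : p + 1 < n := by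
      rw [mem_ascSet] at hpA; omega
    refine ⟨π ⟨p + 1, hpn⟩, ?_, by simp⟩
    simp only [Finset.coe_filter, Set.mem_setOf_eq, Finset.mem_univ, true_and]
    constructor
    · rw [pv_eq π hpn] at hpi; exact hpi
    · rw [gfun_eq_D_iff π h₂]
      simp only [Equiv.symm_apply_apply]
      exact ⟨by omega, by simpa using hpA⟩

private lemma levelAt_eq (h₂ : ¬ ContainsC123 π) (i : ℕ) (hi : i ≤ n) :
    levelAt (gammaPath π) i
      = ((ascSet π).filter fun p => pv π p < i ∧ i ≤ pv π (p + 1)).card := by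
  rw [levelAt, countU_take π h₂ i hi, countD_take π h₂ i hi]
  have hsub : ((ascSet π).filter fun p => pv π (p + 1) < i)
      ⊆ ((ascSet π).filter fun p => pv π p < i) := by
    intro p hp
    simp only [Finset.mem_filter] at hp ⊢
    refine ⟨hp.1, ?_⟩
    have := (mem_ascSet π).1 hp.1
    omega
  rw [← Finset.card_sdiff_of_subset hsub]
  congr 1
  ext p
  simp only [Finset.mem_sdiff, Finset.mem_filter, not_and]
  constructor
  · rintro ⟨⟨h1, h2⟩, h3⟩
    exact ⟨h1, h2, by by_contra hc; push_neg at hc; exact absurd (h3 h1) (by omega)⟩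
  · rintro ⟨h1, h2, h3⟩
    exact ⟨⟨h1, h2⟩, fun _ => by omega⟩

private lemma twoArea_eq (h₂ : ¬ ContainsC123 π) :
    twoArea (gammaPath π) = 2 * ∑ p ∈ ascSet π, (pv π (p + 1) - pv π p) := by
  have hlen : (gammaPath π).length = n := by
    rw [gammaPath_eq]; exact List.length_ofFn
  set F : ℕ → ℕ := fun i =>
    ((ascSet π).filter fun p => pv π p < i ∧ i ≤ pv π (p + 1)).card with hFdef
  have hF0 : F 0 = 0 := by
    simp only [hFdef, Finset.card_eq_zero]
    rw [Finset.filter_eq_empty_iff]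
    intro p _
    simp
  have hFn : F n = 0 := by
    simp only [hFdef, Finset.card_eq_zero]
    rw [Finset.filter_eq_empty_iff]
    intro p hp
    rw [mem_ascSet] at hp
    have : pv π (p + 1) < n := by
      rw [pv_eq π hp.1]
      exact (π ⟨p + 1, hp.1⟩).isLt
    omega
  have hstep : ∀ i ∈ Finset.range n,
      levelAt (gammaPath π) i + levelAt (gammaPath π) (i + 1) = F i + F (i + 1) := by
    intro i hi
    rw [Finset.mem_range] at hi
    rw [levelAt_eq π h₂ i (le_of_lt hi), levelAt_eq π h₂ (i + 1) hi]
  rw [twoArea, hlen, Finset.sum_congr rfl hstep, Finset.sum_add_distrib]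
  have h1 : ∑ i ∈ Finset.range n, F i = ∑ i ∈ Finset.range (n + 1), F i := by
    rw [Finset.sum_range_succ, hFn, add_zero]
  have h2 : ∑ i ∈ Finset.range n, F (i + 1) = ∑ i ∈ Finset.range (n + 1), F i := by
    rw [Finset.sum_range_succ' F n, hF0, add_zero]
  rw [h1, h2, ← two_mul]
  congr 1
  have hswap : ∑ i ∈ Finset.range (n + 1), F i
      = ∑ p ∈ ascSet π, ∑ i ∈ Finset.range (n + 1),
          if pv π p < i ∧ i ≤ pv π (p + 1) then 1 else 0 := by
    simp only [hFdef, Finset.card_filter]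
    exact Finset.sum_comm
  rw [hswap]
  apply Finset.sum_congr rfl
  intro p hp
  rw [mem_ascSet] at hp
  have hb : pv π (p + 1) < n := by
    rw [pv_eq π hp.1]
    exact (π ⟨p + 1, hp.1⟩).isLt
  rw [← Finset.card_filter]
  have hIco : (Finset.range (n + 1)).filter (fun i => pv π p < i ∧ i ≤ pv π (p + 1))
      = Finset.Ico (pv π p + 1) (pv π (p + 1) + 1) := by
    ext i
    simp only [Finset.mem_filter, Finset.mem_range, Finset.mem_Ico]
    omega
  rw [hIco, Nat.card_Ico]
  omega

private lemma count_H_add_count_U (hn : 1 ≤ n) (h₂ : ¬ ContainsC123 π) :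
    (gammaPath π).count Step.H + (gammaPath π).count Step.U = desCount π + 1 := by
  rw [gammaPath_eq, count_ofFn', count_ofFn']
  have hdisj : Disjoint (Finset.univ.filter fun v : Fin n => gfun π v = Step.H)
      (Finset.univ.filter fun v : Fin n => gfun π v = Step.U) := by
    rw [Finset.disjoint_filter]
    intro v _ hH hU
    rw [hH] at hU
    exact Step.noConfusion hU
  rw [← Finset.card_union_of_disjoint hdisj, ← Finset.filter_or]
  have hiff : ∀ v : Fin n, (gfun π v = Step.H ∨ gfun π v = Step.U)
      ↔ RunStartAt π (π.symm v) := by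
    intro v
    rw [gfun]
    split_ifs with hs he he
    · simp [hs]
    · simp [hs]
    · simp only [reduceCtorEq, or_self, false_iff]
      exact fun h => hs h
    · exact (not_middle π h₂ (π.symm v)).elim (fun h => absurd h hs) (fun h => absurd h he)
  rw [Finset.filter_congr (fun v _ => by rw [hiff v])]
  have hcard1 : (Finset.univ.filter fun v : Fin n => RunStartAt π (π.symm v)).card
      = (Finset.univ.filter fun p : Fin n => RunStartAt π p).card := by
    apply Finset.card_nbij (fun v => π.symm v)
    · intro v hv
      simp only [Finset.coe_filter, Finset.mem_filter, Finset.mem_univ, true_and, Set.mem_setOf_eq] at hv ⊢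
      exact hv
    · intro x _ y _ hxy
      exact π.symm.injective hxy
    · intro p hp
      simp only [Finset.coe_filter, Set.mem_setOf_eq, Finset.mem_univ, true_and] at hp
      exact ⟨π p, by simpa using hp, by simp⟩
  rw [hcard1]
  have hn0 : 0 < n := hn
  set D : Finset ℕ := (Finset.range (n - 1)).filter fun i => pv π (i + 1) < pv π i with hD
  set z : Fin n := ⟨0, hn0⟩ with hz
  set f : ℕ → Fin n := fun i => if h : i + 1 < n then (⟨i + 1, h⟩ : Fin n) else z with hf
  have hset : (Finset.univ.filter fun p : Fin n => RunStartAt π p)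
      = insert z (D.image f) := by
    ext p
    simp only [Finset.mem_filter, Finset.mem_univ, true_and, Finset.mem_insert,
      Finset.mem_image]
    constructor
    · intro hstart
      by_cases hp0 : (p : ℕ) = 0
      · left; exact Fin.ext hp0
      · right
        have hp1 : 0 < (p : ℕ) := by omega
        refine ⟨(p : ℕ) - 1, ?_, ?_⟩
        · simp only [hD, Finset.mem_filter, Finset.mem_range]
          have hqn : (p : ℕ) - 1 < n := lt_trans (by omega) p.isLt
          have he : (p : ℕ) - 1 + 1 = (p : ℕ) := by omega
          constructor
          · have := p.isLt; omega
          · rw [he]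
            have hd := hstart ⟨(p : ℕ) - 1, hqn⟩ (by simp; omega)
            rw [Fin.lt_def] at hd
            have e1 : pv π (p : ℕ) = ((π p : Fin n) : ℕ) := pv_val π p
            have e2 : pv π ((p : ℕ) - 1) = ((π ⟨(p : ℕ) - 1, hqn⟩ : Fin n) : ℕ) :=
              pv_val π ⟨(p : ℕ) - 1, hqn⟩
            omega
        · simp only [hf]
          have he : (p : ℕ) - 1 + 1 = (p : ℕ) := by omega
          rw [dif_pos (by rw [he]; exact p.isLt)]
          exact Fin.ext he
    · rintro (rfl | ⟨i, hi, rfl⟩)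
      · intro q hq
        simp only [hz] at hq
        omega
      · simp only [hD, Finset.mem_filter, Finset.mem_range] at hi
        obtain ⟨hi1, hi2⟩ := hi
        have hi1' : i + 1 < n := by omega
        simp only [hf, dif_pos hi1']
        intro q hq
        simp only at hq
        have hqn : (q : ℕ) = i := by omega
        have e1 : pv π (i + 1) = ((π ⟨i + 1, hi1'⟩ : Fin n) : ℕ) := pv_val π ⟨i + 1, hi1'⟩
        have e2 : pv π i = ((π q : Fin n) : ℕ) := by rw [← hqn]; exact pv_val π q
        rw [Fin.lt_def]
        omega
  have hinj : Set.InjOn f D := by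
    intro x hx y hy hxy
    simp only [hD, Finset.coe_filter, Set.mem_setOf_eq, Finset.mem_range] at hx hy
    simp only [hf, dif_pos (show x + 1 < n by omega), dif_pos (show y + 1 < n by omega),
      Fin.mk.injEq] at hxy
    omega
  have hnm : z ∉ D.image f := by
    intro hmem
    rw [Finset.mem_image] at hmem
    obtain ⟨i, hi, hif⟩ := hmem
    simp only [hD, Finset.mem_filter, Finset.mem_range] at hi
    simp only [hf, dif_pos (show i + 1 < n by omega)] at hif
    have hzv : i + 1 = (z : ℕ) := by rw [← hif]
    simp only [hz] at hzv
    omega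
  rw [hset, Finset.card_insert_of_notMem hnm, Finset.card_image_of_injOn hinj]
  rw [desCount, ← hD, add_comm]

end BarilAux

/-- For `n ≥ 1` and `π ∈ S_n(132, 1̲2̲3̲)` with Motzkin path
`d = Γ(π)`: `coinv(π)` equals the area between `d` and the x-axis (stated as
`2·coinv(π) = twoArea d`), and `des(π)` equals the number of tunnels of `d`
(which is the number of its `H` steps plus the number of its `U` steps) minus one. -/
theorem coinv_eq_area_and_des_eq_tunnels (n : ℕ) (hn : 1 ≤ n) (π : Equiv.Perm (Fin n))
    (h₁ : ¬ Contains132 π) (h₂ : ¬ ContainsC123 π) :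
    2 * coinvCount π = twoArea (gammaPath π) ∧
    desCount π + 1 = (gammaPath π).count Step.H + (gammaPath π).count Step.U := by
  constructor
  · rw [coinv_eq_sum, sum_cset π h₁ h₂, twoArea_eq π h₂]
  · rw [count_H_add_count_U π hn h₂]
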